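/- Let X be the parabolic region {(x,y) ∈ ℝ² : x ≥ 0, |y| ≤ √x} with the Euclidean metric, and let i: [0,∞) → X be i(x) = (x,0). Then i is a coarse equivalence for the sublinear coarse structures; in particular, every point (x,y) ∈ X satisfies d((x,y), i([0,∞))) ≤ √x ≤ √‖(x,y)‖, so the displacement of the retraction (x,y) ↦ (x,0) is sublinear in the norm. -/

import Mathlib

/-- Controlled sets of the sublinear coarse structure on a metric space with
basepoint `x0`. -/
def SubControlled {X : Type*} [MetricSpace X] (x0 : X) (E : Set (X × X)) : Prop :=
  (∀ K : Set X, Bornology.IsBounded K →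
      Bornology.IsBounded {y | ∃ x ∈ K, (y, x) ∈ E} ∧
      Bornology.IsBounded {y | ∃ x ∈ K, (x, y) ∈ E}) ∧
  (∀ ε : ℝ, 0 < ε → ∃ r : ℝ, ∀ x y : X, r ≤ dist x x0 → (y, x) ∈ E →
      dist y x ≤ ε * dist x x0) ∧
  (∀ ε : ℝ, 0 < ε → ∃ r : ℝ, ∀ x y : X, r ≤ dist x x0 → (x, y) ∈ E →
      dist x y ≤ ε * dist x x0)

/-- `f : X → Y` is a coarse morphism for the sublinear coarse structures:
it is proper and `f × f` takes controlled sets to controlled sets. -/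
def SubCoarseMap {X Y : Type*} [MetricSpace X] [MetricSpace Y]
    (x0 : X) (y0 : Y) (f : X → Y) : Prop :=
  (∀ B : Set Y, Bornology.IsBounded B → Bornology.IsBounded (f ⁻¹' B)) ∧
  ∀ E : Set (X × X), SubControlled x0 E → SubControlled y0 (Prod.map f f '' E)

/-- Two maps are close if the set of pairs of their values is controlled. -/
def SubClose {Z Y : Type*} [MetricSpace Y] (y0 : Y) (h₁ h₂ : Z → Y) : Prop :=
  SubControlled y0 {p : Y × Y | ∃ z : Z, p = (h₁ z, h₂ z)}

/-- The parabolic region `X = {(x,y) : x ≥ 0, |y| ≤ √x} ⊆ ℝ²` (Euclidean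
metric). -/
def Parab : Type :=
  {p : EuclideanSpace ℝ (Fin 2) // 0 ≤ p 0 ∧ |p 1| ≤ Real.sqrt (p 0)}

noncomputable instance : MetricSpace Parab := Subtype.metricSpace

/-- The half line `[0, ∞)`. -/
def Half : Type := {t : ℝ // 0 ≤ t}

noncomputable instance : MetricSpace Half := Subtype.metricSpace

/-- The inclusion `i : [0,∞) → X`, `i(t) = (t, 0)`. -/
noncomputable def parabIncl (t : Half) : Parab :=
  ⟨(WithLp.equiv 2 (Fin 2 → ℝ)).symm ![t.1, 0],
    by
      constructor
      · simp [t.2]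
      · simp [Real.sqrt_nonneg t.1]⟩

/-! ### auxiliary lemmas -/

lemma eucl_dist_eq (a b : EuclideanSpace ℝ (Fin 2)) :
    dist a b = Real.sqrt ((a 0 - b 0)^2 + (a 1 - b 1)^2) := by
  rw [EuclideanSpace.dist_eq]
  simp [Fin.sum_univ_two, Real.dist_eq, sq_abs]

lemma half_dist (s t : Half) : dist s t = |s.1 - t.1| := by
  rw [show dist s t = dist s.1 t.1 from rfl, Real.dist_eq]

lemma parab_dist (p q : Parab) :
    dist p q = Real.sqrt ((p.1 0 - q.1 0)^2 + (p.1 1 - q.1 1)^2) := by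
  rw [show dist p q = dist p.1 q.1 from rfl, eucl_dist_eq]

lemma parabIncl_coord0 (t : Half) : (parabIncl t).1 0 = t.1 := by simp [parabIncl]
lemma parabIncl_coord1 (t : Half) : (parabIncl t).1 1 = 0 := by simp [parabIncl]

noncomputable def parabRet (p : Parab) : Half := ⟨p.1 0, p.2.1⟩

noncomputable def zbase : Half := ⟨0, le_refl 0⟩
noncomputable def pbase : Parab := parabIncl zbase

lemma coord0_le_dist (p q : Parab) : |p.1 0 - q.1 0| ≤ dist p q := by
  rw [parab_dist, ← Real.sqrt_sq_eq_abs (p.1 0 - q.1 0)]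
  exact Real.sqrt_le_sqrt (by nlinarith [sq_nonneg (p.1 1 - q.1 1)])

lemma coord1_le_dist (p q : Parab) : |p.1 1 - q.1 1| ≤ dist p q := by
  rw [parab_dist, ← Real.sqrt_sq_eq_abs (p.1 1 - q.1 1)]
  exact Real.sqrt_le_sqrt (by nlinarith [sq_nonneg (p.1 0 - q.1 0)])

lemma parab_dist_le (p q : Parab) :
    dist p q ≤ |p.1 0 - q.1 0| + |p.1 1 - q.1 1| := by
  rw [parab_dist]
  have h : (p.1 0 - q.1 0)^2 + (p.1 1 - q.1 1)^2
      ≤ (|p.1 0 - q.1 0| + |p.1 1 - q.1 1|)^2 := by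
    nlinarith [sq_abs (p.1 0 - q.1 0), sq_abs (p.1 1 - q.1 1),
      mul_nonneg (abs_nonneg (p.1 0 - q.1 0)) (abs_nonneg (p.1 1 - q.1 1))]
  calc Real.sqrt ((p.1 0 - q.1 0)^2 + (p.1 1 - q.1 1)^2)
      ≤ Real.sqrt ((|p.1 0 - q.1 0| + |p.1 1 - q.1 1|)^2) := Real.sqrt_le_sqrt h
    _ = |p.1 0 - q.1 0| + |p.1 1 - q.1 1| := by
        rw [Real.sqrt_sq (by positivity)]

lemma dist_incl (s t : Half) : dist (parabIncl s) (parabIncl t) = dist s t := by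
  rw [parab_dist, parabIncl_coord0, parabIncl_coord0, parabIncl_coord1,
    parabIncl_coord1, half_dist]
  simp [Real.sqrt_sq_eq_abs]

lemma dist_half_z0 (t : Half) : dist t zbase = t.1 := by
  rw [half_dist]; simp [zbase, abs_of_nonneg t.2]

lemma dist_incl_p0 (t : Half) : dist (parabIncl t) pbase = t.1 := by
  rw [pbase, dist_incl, dist_half_z0]

lemma coord0_le_dist_p0 (p : Parab) : p.1 0 ≤ dist p pbase := by
  have := coord0_le_dist p pbase
  rw [show (pbase.1 0) = 0 from by rw [pbase, parabIncl_coord0]; rfl, sub_zero,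
    abs_of_nonneg p.2.1] at this
  exact this

lemma dist_p0_le (p : Parab) : dist p pbase ≤ p.1 0 + Real.sqrt (p.1 0) := by
  have h := parab_dist_le p pbase
  rw [show (pbase.1 0) = 0 from by rw [pbase, parabIncl_coord0]; rfl,
    show (pbase.1 1) = 0 from by rw [pbase, parabIncl_coord1], sub_zero, sub_zero,
    abs_of_nonneg p.2.1] at h
  exact h.trans (by linarith [p.2.2])

lemma dist_ret (p : Parab) : dist p (parabIncl (parabRet p)) = |p.1 1| := by
  rw [parab_dist, parabIncl_coord0, parabIncl_coord1]
  simp [parabRet, Real.sqrt_sq_eq_abs]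

lemma ret_incl (t : Half) : parabRet (parabIncl t) = t := by
  apply Subtype.ext; simp [parabRet, parabIncl_coord0]

lemma ret_coord (p : Parab) : (parabRet p).1 = p.1 0 := rfl

lemma sqrt_le_eps_mul {ε d : ℝ} (hε : 0 < ε) (hd : 1/ε^2 ≤ d) :
    Real.sqrt d ≤ ε * d := by
  have hd0 : 0 ≤ d := le_trans (by positivity) hd
  have hs := Real.sq_sqrt hd0
  have hsn := Real.sqrt_nonneg d
  have h0 : 1 ≤ ε^2 * d := by
    have hε2 : 0 < ε^2 := by positivity
    rw [div_le_iff₀ hε2] at hd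
    nlinarith
  have h1 : 1 ≤ ε * Real.sqrt d := by nlinarith [mul_nonneg hε.le hsn]
  nlinarith

lemma bdd {X : Type*} [MetricSpace X] {S : Set X} (c : X) (R : ℝ)
    (h : ∀ y ∈ S, dist y c ≤ R) : Bornology.IsBounded S :=
  Metric.isBounded_closedBall.subset (fun y hy => Metric.mem_closedBall.mpr (h y hy))

lemma dist_p0_le_two_mul (p : Parab) (h : 1 ≤ p.1 0) :
    dist p pbase ≤ 2 * p.1 0 := by
  have h1 := dist_p0_le p
  have h2 : Real.sqrt (p.1 0) ≤ p.1 0 := by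
    have hs := Real.sq_sqrt p.2.1
    have hn := Real.sqrt_nonneg (p.1 0)
    nlinarith
  linarith

/-! ### main lemmas -/

lemma inclProper : ∀ B : Set Parab, Bornology.IsBounded B →
    Bornology.IsBounded (parabIncl ⁻¹' B) := by
  intro B hB
  obtain ⟨R, hR⟩ := (Metric.isBounded_iff_subset_closedBall pbase).mp hB
  apply bdd zbase R
  intro t ht
  have h := Metric.mem_closedBall.mp (hR ht)
  rw [dist_incl_p0] at h
  rw [dist_half_z0]; exact h

lemma retProper : ∀ B : Set Half, Bornology.IsBounded B →
    Bornology.IsBounded (parabRet ⁻¹' B) := by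
  intro B hB
  obtain ⟨R, hR⟩ := (Metric.isBounded_iff_subset_closedBall zbase).mp hB
  apply bdd pbase (R + Real.sqrt R)
  intro p hp
  have h := Metric.mem_closedBall.mp (hR hp)
  rw [dist_half_z0, ret_coord] at h
  have h2 : Real.sqrt (p.1 0) ≤ Real.sqrt R := Real.sqrt_le_sqrt h
  have := dist_p0_le p
  linarith

lemma inclCoarse : SubCoarseMap zbase pbase parabIncl := by
  refine ⟨inclProper, ?_⟩
  intro E hE
  refine ⟨?_, ?_, ?_⟩
  · intro K hK
    obtain ⟨h1, h2⟩ := hE.1 (parabIncl ⁻¹' K) (inclProper K hK)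
    constructor
    · obtain ⟨R, hR⟩ := (Metric.isBounded_iff_subset_closedBall zbase).mp h1
      apply bdd pbase R
      rintro y ⟨x, hxK, ⟨b, a⟩, hba, heq⟩
      simp only [Prod.map_apply, Prod.mk.injEq] at heq
      obtain ⟨rfl, rfl⟩ := heq
      have hb : b ∈ {y | ∃ x ∈ parabIncl ⁻¹' K, (y, x) ∈ E} := ⟨a, hxK, hba⟩
      have := Metric.mem_closedBall.mp (hR hb)
      rw [dist_half_z0] at this
      rw [dist_incl_p0]; exact this
    · obtain ⟨R, hR⟩ := (Metric.isBounded_iff_subset_closedBall zbase).mp h2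
      apply bdd pbase R
      rintro y ⟨x, hxK, ⟨b, a⟩, hba, heq⟩
      simp only [Prod.map_apply, Prod.mk.injEq] at heq
      obtain ⟨rfl, rfl⟩ := heq
      have ha : a ∈ {y | ∃ x ∈ parabIncl ⁻¹' K, (x, y) ∈ E} := ⟨b, hxK, hba⟩
      have := Metric.mem_closedBall.mp (hR ha)
      rw [dist_half_z0] at this
      rw [dist_incl_p0]; exact this
  · intro ε hε
    obtain ⟨r, hr⟩ := hE.2.1 ε hε
    refine ⟨r, ?_⟩
    rintro x y hx ⟨⟨b, a⟩, hba, heq⟩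
    simp only [Prod.map_apply, Prod.mk.injEq] at heq
    obtain ⟨rfl, rfl⟩ := heq
    rw [dist_incl_p0] at hx ⊢
    rw [dist_incl]
    have := hr a b (by rw [dist_half_z0]; exact hx) hba
    rw [dist_half_z0] at this
    exact this
  · intro ε hε
    obtain ⟨r, hr⟩ := hE.2.2 ε hε
    refine ⟨r, ?_⟩
    rintro x y hx ⟨⟨a, b⟩, hab, heq⟩
    simp only [Prod.map_apply, Prod.mk.injEq] at heq
    obtain ⟨rfl, rfl⟩ := heq
    rw [dist_incl_p0] at hx ⊢
    rw [dist_incl]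
    have := hr a b (by rw [dist_half_z0]; exact hx) hab
    rw [dist_half_z0] at this
    exact this

lemma retCoarse : SubCoarseMap pbase zbase parabRet := by
  refine ⟨retProper, ?_⟩
  intro E hE
  refine ⟨?_, ?_, ?_⟩
  · intro K hK
    obtain ⟨h1, h2⟩ := hE.1 (parabRet ⁻¹' K) (retProper K hK)
    constructor
    · obtain ⟨R, hR⟩ := (Metric.isBounded_iff_subset_closedBall pbase).mp h1
      apply bdd zbase R
      rintro y ⟨x, hxK, ⟨q, p⟩, hqp, heq⟩
      simp only [Prod.map_apply, Prod.mk.injEq] at heq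
      obtain ⟨rfl, rfl⟩ := heq
      have hq : q ∈ {y | ∃ x ∈ parabRet ⁻¹' K, (y, x) ∈ E} := ⟨p, hxK, hqp⟩
      have := Metric.mem_closedBall.mp (hR hq)
      rw [dist_half_z0, ret_coord]
      exact (coord0_le_dist_p0 q).trans this
    · obtain ⟨R, hR⟩ := (Metric.isBounded_iff_subset_closedBall pbase).mp h2
      apply bdd zbase R
      rintro y ⟨x, hxK, ⟨p, q⟩, hpq, heq⟩
      simp only [Prod.map_apply, Prod.mk.injEq] at heq
      obtain ⟨rfl, rfl⟩ := heq
      have hq : q ∈ {y | ∃ x ∈ parabRet ⁻¹' K, (x, y) ∈ E} := ⟨p, hxK, hpq⟩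
      have := Metric.mem_closedBall.mp (hR hq)
      rw [dist_half_z0, ret_coord]
      exact (coord0_le_dist_p0 q).trans this
  · intro ε hε
    obtain ⟨r', hr'⟩ := hE.2.1 (ε/2) (by linarith)
    refine ⟨max r' 1, ?_⟩
    rintro x y hx ⟨⟨q, p⟩, hqp, heq⟩
    simp only [Prod.map_apply, Prod.mk.injEq] at heq
    obtain ⟨rfl, rfl⟩ := heq
    rw [dist_half_z0, ret_coord] at hx ⊢
    have h1 : 1 ≤ p.1 0 := le_trans (le_max_right r' 1) hx
    have hd : r' ≤ dist p pbase :=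
      le_trans (le_max_left r' 1) (hx.trans (coord0_le_dist_p0 p))
    have h2 := hr' p q hd hqp
    have h3 : dist (parabRet q) (parabRet p) ≤ dist q p := by
      rw [half_dist, ret_coord, ret_coord]; exact coord0_le_dist q p
    have h4 := dist_p0_le_two_mul p h1
    have h5 : (0:ℝ) < ε := hε
    nlinarith [dist_nonneg (x := q) (y := p)]
  · intro ε hε
    obtain ⟨r', hr'⟩ := hE.2.2 (ε/2) (by linarith)
    refine ⟨max r' 1, ?_⟩
    rintro x y hx ⟨⟨p, q⟩, hpq, heq⟩
    simp only [Prod.map_apply, Prod.mk.injEq] at heq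
    obtain ⟨rfl, rfl⟩ := heq
    rw [dist_half_z0, ret_coord] at hx ⊢
    have h1 : 1 ≤ p.1 0 := le_trans (le_max_right r' 1) hx
    have hd : r' ≤ dist p pbase :=
      le_trans (le_max_left r' 1) (hx.trans (coord0_le_dist_p0 p))
    have h2 := hr' p q hd hpq
    have h3 : dist (parabRet p) (parabRet q) ≤ dist p q := by
      rw [half_dist, ret_coord, ret_coord]; exact coord0_le_dist p q
    have h4 := dist_p0_le_two_mul p h1
    nlinarith [dist_nonneg (x := p) (y := q)]

lemma closeIG : SubClose pbase (parabIncl ∘ parabRet) id := by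
  refine ⟨?_, ?_, ?_⟩
  · intro K hK
    obtain ⟨R, hR⟩ := (Metric.isBounded_iff_subset_closedBall pbase).mp hK
    constructor
    · apply bdd pbase R
      rintro y ⟨x, hxK, q, heq⟩
      have hy : y = parabIncl (parabRet q) := congrArg Prod.fst heq
      have hx2 : x = q := congrArg Prod.snd heq
      rw [hx2] at hxK
      rw [hy, dist_incl_p0, ret_coord]
      exact (coord0_le_dist_p0 q).trans (Metric.mem_closedBall.mp (hR hxK))
    · apply bdd pbase (R + Real.sqrt R)
      rintro y ⟨x, hxK, q, heq⟩
      have hx2 : x = parabIncl (parabRet q) := congrArg Prod.fst heq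
      have hy : y = q := congrArg Prod.snd heq
      rw [hx2] at hxK
      have h := Metric.mem_closedBall.mp (hR hxK)
      rw [dist_incl_p0, ret_coord] at h
      have h2 : Real.sqrt (q.1 0) ≤ Real.sqrt R := Real.sqrt_le_sqrt h
      have h3 := dist_p0_le q
      rw [hy]
      linarith
  · intro ε hε
    refine ⟨1/ε^2, ?_⟩
    rintro x y hx ⟨q, heq⟩
    have hy : y = parabIncl (parabRet q) := congrArg Prod.fst heq
    have hx2 : x = q := congrArg Prod.snd heq
    subst hx2
    rw [hy]
    have h1 : dist (parabIncl (parabRet x)) x = |x.1 1| := by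
      rw [dist_comm]; exact dist_ret x
    have h2 : |x.1 1| ≤ Real.sqrt (x.1 0) := x.2.2
    have h3 : Real.sqrt (x.1 0) ≤ Real.sqrt (dist x pbase) :=
      Real.sqrt_le_sqrt (coord0_le_dist_p0 x)
    have h4 := sqrt_le_eps_mul hε hx
    rw [h1]; linarith
  · intro ε hε
    refine ⟨1/ε^2, ?_⟩
    rintro x y hx ⟨q, heq⟩
    have hx2 : x = parabIncl (parabRet q) := congrArg Prod.fst heq
    have hy : y = q := congrArg Prod.snd heq
    subst hy
    rw [hx2] at hx ⊢
    rw [dist_incl_p0, ret_coord] at hx ⊢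
    have h1 : dist (parabIncl (parabRet y)) y = |y.1 1| := by
      rw [dist_comm]; exact dist_ret y
    have h2 : |y.1 1| ≤ Real.sqrt (y.1 0) := y.2.2
    have h4 := sqrt_le_eps_mul hε hx
    rw [h1]; linarith

lemma closeGI : SubClose zbase (parabRet ∘ parabIncl) id := by
  refine ⟨?_, ?_, ?_⟩
  · intro K hK
    constructor
    · apply hK.subset
      rintro y ⟨x, hxK, t, heq⟩
      have hy : y = parabRet (parabIncl t) := congrArg Prod.fst heq
      have hx2 : x = t := congrArg Prod.snd heq
      rw [hy, ret_incl, ← hx2]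
      exact hxK
    · apply hK.subset
      rintro y ⟨x, hxK, t, heq⟩
      have hx2 : x = parabRet (parabIncl t) := congrArg Prod.fst heq
      have hy : y = t := congrArg Prod.snd heq
      rw [ret_incl] at hx2
      rw [hy, ← hx2]
      exact hxK
  · intro ε hε
    refine ⟨0, ?_⟩
    rintro x y hx ⟨t, heq⟩
    have hy : y = parabRet (parabIncl t) := congrArg Prod.fst heq
    have hx2 : x = t := congrArg Prod.snd heq
    rw [ret_incl] at hy
    rw [hy, ← hx2, dist_self]
    exact mul_nonneg hε.le dist_nonneg
  · intro ε hε
    refine ⟨0, ?_⟩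
    rintro x y hx ⟨t, heq⟩
    have hx2 : x = parabRet (parabIncl t) := congrArg Prod.fst heq
    have hy : y = t := congrArg Prod.snd heq
    rw [ret_incl] at hx2
    rw [hy, hx2, dist_self]
    exact mul_nonneg hε.le dist_nonneg


/-- The example at the end of §3: the inclusion `i : [0,∞) → X = `parabolic
region, `i(x) = (x,0)`, is a coarse equivalence for the sublinear coarse
structures (basepoints `0` and `(0,0) = i 0`); in particular every point
`(x,y) ∈ X` satisfies `d((x,y), i(x)) ≤ √x ≤ √‖(x,y)‖`, so the displacement of
the retraction `(x,y) ↦ (x,0)` is sublinear in the norm. -/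
theorem parabola_coarse_equivalence :
    let z0 : Half := ⟨0, le_refl 0⟩
    let p0 : Parab := parabIncl z0
    -- `i` is a coarse morphism
    SubCoarseMap z0 p0 parabIncl ∧
    -- with a coarse inverse
    (∃ g : Parab → Half, SubCoarseMap p0 z0 g ∧
      SubClose p0 (parabIncl ∘ g) id ∧ SubClose z0 (g ∘ parabIncl) id) ∧
    -- displacement estimate
    (∀ p : Parab, dist p (parabIncl ⟨p.1 0, p.2.1⟩) ≤ Real.sqrt (p.1 0) ∧
      Real.sqrt (p.1 0) ≤ Real.sqrt (dist p p0)) := by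
  intro z0 p0
  refine ⟨inclCoarse, ⟨parabRet, retCoarse, closeIG, closeGI⟩, ?_⟩
  intro p
  constructor
  · rw [show (⟨p.1 0, p.2.1⟩ : Half) = parabRet p from rfl, dist_ret]
    exact p.2.2
  · exact Real.sqrt_le_sqrt (coord0_le_dist_p0 p)
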